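/- Let Z be an abelian group, let A ⊆ Z be finite and nonempty, let K ≥ 2 be the real number with |A − A| = K|A|, let 0 ≤ ε ≤ 1, and suppose E(A) ≤ K^{−(1−ε)}. Then there exist a set T ⊆ A − A and a real exponent 0 ≤ β ≤ 1 such that: (i) |A[t]| ≥ |A|/(2K) for all t ∈ T; (ii) K^β |A| ≤ |A[t] − A| ≤ 2 K^β |A| for all t ∈ T; and (iii) |T| ≥ K^{1−ε} |A| / (4 (1 + log₂ K)). -/

import Mathlib

open Finset Pointwise
open scoped Classical

/-- The additive energy `E(A) = |A|⁻³ · |{(a₁,a₂,a₃,a₄) ∈ A⁴ : a₁ − a₂ = a₃ − a₄}|`. -/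
noncomputable def energy {Z : Type*} [AddCommGroup Z] [DecidableEq Z] (A : Finset Z) : ℝ :=
  (((A ×ˢ A ×ˢ A ×ˢ A).filter
      (fun x => x.1 - x.2.1 = x.2.2.1 - x.2.2.2)).card : ℝ) / (A.card : ℝ) ^ 3

/-- `A[t] = (A + t) ∩ A`. -/
def shiftInter {Z : Type*} [AddCommGroup Z] [DecidableEq Z] (A : Finset Z) (t : Z) : Finset Z :=
  (A.image (fun a => a + t)) ∩ A

set_option maxHeartbeats 1000000

section aux
variable {Z : Type*} [AddCommGroup Z] [DecidableEq Z]

lemma r_eq (A : Finset Z) (t : Z) :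
    ((A ×ˢ A).filter (fun p => p.1 - p.2 = t)).card = (shiftInter A t).card := by
  apply Finset.card_nbij' (fun p => p.1) (fun a => (a, a - t))
  · intro p hp
    simp only [Finset.mem_coe, mem_filter, mem_product] at hp
    simp only [Finset.mem_coe, shiftInter, mem_inter, mem_image]
    refine ⟨⟨p.2, hp.1.2, ?_⟩, hp.1.1⟩
    rw [← hp.2]; abel
  · intro a ha
    simp only [Finset.mem_coe, shiftInter, mem_inter, mem_image] at ha
    obtain ⟨⟨b, hb, hab⟩, haA⟩ := ha
    simp only [Finset.mem_coe, mem_filter, mem_product]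
    refine ⟨⟨haA, ?_⟩, by abel⟩
    have : a - t = b := by rw [← hab]; abel
    rwa [this]
  · intro p hp
    simp only [Finset.mem_coe, mem_filter] at hp
    have : p.1 - t = p.2 := by rw [← hp.2]; abel
    exact Prod.ext rfl this
  · intro a _; rfl

lemma sum_r (A : Finset Z) :
    ∑ t ∈ (A - A), ((A ×ˢ A).filter (fun p => p.1 - p.2 = t)).card = A.card ^ 2 := by
  rw [← Finset.card_eq_sum_card_fiberwise (f := fun p : Z × Z => p.1 - p.2)
    (t := A - A) (fun p hp => by
      simp only [Finset.mem_coe, mem_product] at hp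
      exact Finset.sub_mem_sub hp.1 hp.2)]
  rw [Finset.card_product]; ring

lemma energy_count (A : Finset Z) :
    ((A ×ˢ A ×ˢ A ×ˢ A).filter
      (fun x => x.1 - x.2.1 = x.2.2.1 - x.2.2.2)).card
    = ∑ t ∈ (A - A), ((A ×ˢ A).filter (fun p => p.1 - p.2 = t)).card ^ 2 := by
  rw [Finset.card_eq_sum_card_fiberwise (f := fun x : Z × Z × Z × Z => x.1 - x.2.1)
    (t := A - A) (fun x hx => by
      simp only [Finset.mem_coe, mem_filter, mem_product] at hx
      exact Finset.sub_mem_sub hx.1.1 hx.1.2.1)]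
  refine Finset.sum_congr rfl fun t _ => ?_
  rw [sq, ← Finset.card_product]
  apply Finset.card_nbij' (fun x => ((x.1, x.2.1), (x.2.2.1, x.2.2.2)))
    (fun p => (p.1.1, p.1.2, p.2.1, p.2.2))
  · intro x hx
    simp only [Finset.mem_coe, mem_filter, mem_product] at hx ⊢
    obtain ⟨⟨⟨h1, h2, h3, h4⟩, heq⟩, ht⟩ := hx
    exact ⟨⟨⟨h1, h2⟩, ht⟩, ⟨h3, h4⟩, heq ▸ ht⟩
  · intro p hp
    simp only [Finset.mem_coe, mem_product, mem_filter, mem_product] at hp ⊢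
    obtain ⟨⟨⟨h1, h2⟩, ht1⟩, ⟨h3, h4⟩, ht2⟩ := hp
    exact ⟨⟨⟨h1, h2, h3, h4⟩, by rw [ht1, ht2]⟩, ht1⟩
  · intro x _; rfl
  · intro p _; rfl

end aux

/-- If `|A − A| = K|A|` with `K ≥ 2`, `0 ≤ ε ≤ 1` and `E(A) ≤ K^{−(1−ε)}`, then there are
`T ⊆ A − A` and `0 ≤ β ≤ 1` with `|A[t]| ≥ |A|/(2K)` and `K^β|A| ≤ |A[t] − A| ≤ 2K^β|A|`
for all `t ∈ T`, and `|T| ≥ K^{1−ε}|A|/(4(1 + log₂ K))`. -/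
theorem statement10 {Z : Type*} [AddCommGroup Z] [DecidableEq Z]
    (A : Finset Z) (hA : A.Nonempty) (K : ℝ) (hK : 2 ≤ K)
    (hKdef : ((A - A).card : ℝ) = K * (A.card : ℝ))
    (ε : ℝ) (hε0 : 0 ≤ ε) (hε1 : ε ≤ 1)
    (hE : energy A ≤ K ^ (-(1 - ε))) :
    ∃ (T : Finset Z) (β : ℝ), T ⊆ A - A ∧ 0 ≤ β ∧ β ≤ 1 ∧
      (∀ t ∈ T, (A.card : ℝ) / (2 * K) ≤ ((shiftInter A t).card : ℝ)) ∧
      (∀ t ∈ T, K ^ β * (A.card : ℝ) ≤ (((shiftInter A t) - A).card : ℝ) ∧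
        (((shiftInter A t) - A).card : ℝ) ≤ 2 * K ^ β * (A.card : ℝ)) ∧
      K ^ (1 - ε) * (A.card : ℝ) / (4 * (1 + Real.logb 2 K)) ≤ (T.card : ℝ) := by
  have hK0 : (0:ℝ) < K := by linarith
  have hKne : K ≠ 0 := ne_of_gt hK0
  have hncard : 0 < A.card := hA.card_pos
  set n : ℝ := (A.card : ℝ) with hn
  have hn0 : (0:ℝ) < n := by rw [hn]; exact_mod_cast hncard
  set r : Z → ℝ := fun t => ((shiftInter A t).card : ℝ) with hrdef
  have hsum : ∑ t ∈ (A - A), r t = n ^ 2 := by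
    have h := sum_r A
    have heq : ∑ t ∈ (A - A), ((A ×ˢ A).filter (fun p => p.1 - p.2 = t)).card
        = ∑ t ∈ (A - A), (shiftInter A t).card :=
      Finset.sum_congr rfl fun t _ => r_eq A t
    rw [heq] at h
    calc ∑ t ∈ (A - A), r t
        = ((∑ t ∈ (A - A), (shiftInter A t).card : ℕ) : ℝ) := by push_cast [hrdef]; rfl
      _ = ((A.card ^ 2 : ℕ) : ℝ) := by rw [h]
      _ = n ^ 2 := by push_cast; rfl
  have hsumsq : ∑ t ∈ (A - A), r t ^ 2 ≤ K ^ (-(1 - ε)) * n ^ 3 := by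
    have h := energy_count A
    have hcast : ∑ t ∈ (A - A), r t ^ 2
        = (((A ×ˢ A ×ˢ A ×ˢ A).filter
            (fun x => x.1 - x.2.1 = x.2.2.1 - x.2.2.2)).card : ℝ) := by
      rw [h]
      push_cast
      refine Finset.sum_congr rfl fun t _ => ?_
      rw [hrdef]
      norm_num [← r_eq A t]
    rw [hcast]
    have hE' : (((A ×ˢ A ×ˢ A ×ˢ A).filter
        (fun x => x.1 - x.2.1 = x.2.2.1 - x.2.2.2)).card : ℝ) / n ^ 3 ≤ K ^ (-(1 - ε)) := hE
    calc (((A ×ˢ A ×ˢ A ×ˢ A).filter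
        (fun x => x.1 - x.2.1 = x.2.2.1 - x.2.2.2)).card : ℝ)
        = (((A ×ˢ A ×ˢ A ×ˢ A).filter
            (fun x => x.1 - x.2.1 = x.2.2.1 - x.2.2.2)).card : ℝ) / n ^ 3 * n ^ 3 := by
          field_simp
      _ ≤ K ^ (-(1 - ε)) * n ^ 3 := mul_le_mul_of_nonneg_right hE' (by positivity)
  set S : Finset Z := (A - A).filter (fun t => n / (2 * K) ≤ r t) with hSdef
  have hSsub : S ⊆ A - A := Finset.filter_subset _ _
  have hS1 : n ^ 2 / 2 ≤ ∑ t ∈ S, r t := by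
    have hsplit := Finset.sum_filter_add_sum_filter_not (A - A)
      (fun t => n / (2 * K) ≤ r t) r
    have hbound : ∑ t ∈ (A - A).filter (fun t => ¬ n / (2 * K) ≤ r t), r t ≤ n ^ 2 / 2 := by
      calc ∑ t ∈ (A - A).filter (fun t => ¬ n / (2 * K) ≤ r t), r t
          ≤ ∑ _t ∈ (A - A).filter (fun t => ¬ n / (2 * K) ≤ r t), n / (2 * K) :=
            Finset.sum_le_sum (fun t ht =>
              le_of_lt (lt_of_not_ge (Finset.mem_filter.mp ht).2))
        _ = (((A - A).filter (fun t => ¬ n / (2 * K) ≤ r t)).card : ℝ) * (n / (2 * K)) := by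
            rw [Finset.sum_const, nsmul_eq_mul]
        _ ≤ ((A - A).card : ℝ) * (n / (2 * K)) := by
            apply mul_le_mul_of_nonneg_right _ (by positivity)
            exact_mod_cast Finset.card_filter_le _ _
        _ = K * n * (n / (2 * K)) := by rw [hKdef]
        _ = n ^ 2 / 2 := by field_simp
    have hsum' : ∑ t ∈ S, r t + ∑ t ∈ (A - A).filter (fun t => ¬ n / (2 * K) ≤ r t), r t
        = n ^ 2 := by rw [hSdef]; rw [hsplit]; exact hsum
    linarith
  have hP : (0:ℝ) < K ^ (1 - ε) := Real.rpow_pos_of_pos hK0 _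
  have hPneg : K ^ (-(1 - ε)) = (K ^ (1 - ε))⁻¹ := Real.rpow_neg hK0.le _
  have hCS : (∑ t ∈ S, r t) ^ 2 ≤ (S.card : ℝ) * ∑ t ∈ S, r t ^ 2 :=
    sq_sum_le_card_mul_sum_sq
  have hsubsum : ∑ t ∈ S, r t ^ 2 ≤ ∑ t ∈ (A - A), r t ^ 2 :=
    Finset.sum_le_sum_of_subset_of_nonneg hSsub (fun t _ _ => sq_nonneg _)
  have hS2 : (n ^ 2 / 2) ^ 2 ≤ (S.card : ℝ) * ((K ^ (1 - ε))⁻¹ * n ^ 3) := by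
    calc (n ^ 2 / 2) ^ 2 ≤ (∑ t ∈ S, r t) ^ 2 := by
          apply pow_le_pow_left₀ (by positivity) hS1
      _ ≤ (S.card : ℝ) * ∑ t ∈ S, r t ^ 2 := hCS
      _ ≤ (S.card : ℝ) * (K ^ (-(1 - ε)) * n ^ 3) :=
          mul_le_mul_of_nonneg_left (le_trans hsubsum hsumsq) (Nat.cast_nonneg _)
      _ = (S.card : ℝ) * ((K ^ (1 - ε))⁻¹ * n ^ 3) := by rw [hPneg]
  have hScard : K ^ (1 - ε) * n / 4 ≤ (S.card : ℝ) := by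
    have h1 : K ^ (1 - ε) * ((n ^ 2 / 2) ^ 2)
        ≤ K ^ (1 - ε) * ((S.card : ℝ) * ((K ^ (1 - ε))⁻¹ * n ^ 3)) :=
      mul_le_mul_of_nonneg_left hS2 hP.le
    have h2 : K ^ (1 - ε) * ((S.card : ℝ) * ((K ^ (1 - ε))⁻¹ * n ^ 3))
        = (S.card : ℝ) * n ^ 3 := by
      have hPne : K ^ (1 - ε) ≠ 0 := ne_of_gt hP
      field_simp
    rw [h2] at h1
    have h3 : (K ^ (1 - ε) * n / 4) * n ^ 3 ≤ (S.card : ℝ) * n ^ 3 := by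
      calc (K ^ (1 - ε) * n / 4) * n ^ 3 = K ^ (1 - ε) * ((n ^ 2 / 2) ^ 2) := by ring
        _ ≤ (S.card : ℝ) * n ^ 3 := h1
    exact le_of_mul_le_mul_right h3 (by positivity)
  -- dyadic pigeonhole
  set m : ℕ := ⌊Real.logb 2 K⌋₊ with hm
  set g : Z → ℕ := fun t => Nat.log 2 ((shiftInter A t - A).card / A.card) with hg
  have hlogb1 : 1 ≤ Real.logb 2 K := by
    rw [← Real.logb_self_eq_one (b := 2) (by norm_num)]
    exact Real.logb_le_logb_of_le (by norm_num) (by norm_num) hK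
  have hlogb0 : 0 < Real.logb 2 K := by linarith
  have hkey : ∀ t ∈ S, (2:ℝ) ^ (g t) * n ≤ ((shiftInter A t - A).card : ℝ)
      ∧ ((shiftInter A t - A).card : ℝ) ≤ 2 * (2:ℝ) ^ (g t) * n ∧ g t ≤ m := by
    intro t ht
    have htr : n / (2 * K) ≤ r t := (Finset.mem_filter.mp ht).2
    have hne : (shiftInter A t).Nonempty := by
      rw [← Finset.card_pos]
      have h0 : (0:ℝ) < ((shiftInter A t).card : ℝ) := lt_of_lt_of_le (by positivity) htr
      exact_mod_cast h0
    have hclow : A.card ≤ (shiftInter A t - A).card := Finset.card_le_card_sub_left hne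
    have hchi : (shiftInter A t - A).card ≤ (A - A).card :=
      Finset.card_le_card (Finset.sub_subset_sub Finset.inter_subset_right le_rfl)
    set c : ℕ := (shiftInter A t - A).card with hc
    set q : ℕ := c / A.card with hq
    have hq1 : 1 ≤ q := (Nat.one_le_div_iff hncard).mpr hclow
    have h2g : 2 ^ (g t) ≤ q := Nat.pow_log_le_self 2 (Nat.one_le_iff_ne_zero.mp hq1)
    have hq2 : q < 2 ^ (g t + 1) := Nat.lt_pow_succ_log_self (by norm_num) q
    have hqc : q * A.card ≤ c := Nat.div_mul_le_self c A.card
    have hcq : c < (q + 1) * A.card := by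
      have h1 : A.card * q + c % A.card = c := by rw [hq]; exact Nat.div_add_mod c A.card
      have h2 : c % A.card < A.card := Nat.mod_lt c hncard
      calc c = A.card * q + c % A.card := h1.symm
        _ < A.card * q + A.card := Nat.add_lt_add_left h2 _
        _ = (q + 1) * A.card := by ring
    have R1 : (2:ℝ) ^ (g t) * n ≤ (c : ℝ) := by
      have ha : ((2:ℝ)) ^ (g t) ≤ (q : ℝ) := by exact_mod_cast h2g
      have hb : (q : ℝ) * n ≤ (c : ℝ) := by rw [hn]; exact_mod_cast hqc
      calc (2:ℝ) ^ (g t) * n ≤ (q : ℝ) * n := mul_le_mul_of_nonneg_right ha hn0.le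
        _ ≤ (c : ℝ) := hb
    have R2 : (c : ℝ) ≤ 2 * (2:ℝ) ^ (g t) * n := by
      have ha : (c : ℝ) ≤ ((q : ℝ) + 1) * n := by
        rw [hn]; exact_mod_cast le_of_lt hcq
      have hb : ((q : ℝ) + 1) ≤ 2 * (2:ℝ) ^ (g t) := by
        have : q + 1 ≤ 2 ^ (g t + 1) := hq2
        calc ((q : ℝ) + 1) ≤ ((2 ^ (g t + 1) : ℕ) : ℝ) := by exact_mod_cast this
          _ = 2 * (2:ℝ) ^ (g t) := by push_cast [pow_succ]; ring
      calc (c : ℝ) ≤ ((q : ℝ) + 1) * n := ha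
        _ ≤ 2 * (2:ℝ) ^ (g t) * n := mul_le_mul_of_nonneg_right hb hn0.le
    have hcK : (c : ℝ) ≤ K * n := by
      rw [← hKdef]; exact_mod_cast hchi
    have hgm : g t ≤ m := by
      apply Nat.le_floor
      rw [Real.le_logb_iff_rpow_le (by norm_num) hK0]
      have hrc : (2:ℝ) ^ ((g t : ℕ) : ℝ) = (2:ℝ) ^ (g t) := Real.rpow_natCast 2 (g t)
      rw [hrc]
      exact le_of_mul_le_mul_right (le_trans R1 hcK) hn0
    exact ⟨R1, R2, hgm⟩
  have hfib : S.card = ∑ j ∈ Finset.range (m + 1), (S.filter (fun t => g t = j)).card :=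
    Finset.card_eq_sum_card_fiberwise
      (fun t ht => Finset.mem_range.mpr (Nat.lt_succ_of_le (hkey t ht).2.2))
  have hpig : ∃ j ∈ Finset.range (m + 1),
      (S.card : ℝ) ≤ ((m : ℝ) + 1) * ((S.filter (fun t => g t = j)).card : ℝ) := by
    by_contra hcon
    push_neg at hcon
    have hlt : ∑ j ∈ Finset.range (m + 1),
        ((m : ℝ) + 1) * ((S.filter (fun t => g t = j)).card : ℝ)
        < ∑ _j ∈ Finset.range (m + 1), (S.card : ℝ) :=
      Finset.sum_lt_sum_of_nonempty (by simp) (fun j hj => hcon j hj)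
    rw [← Finset.mul_sum, Finset.sum_const, Finset.card_range, nsmul_eq_mul] at hlt
    have hsumcast : ∑ j ∈ Finset.range (m + 1),
        ((S.filter (fun t => g t = j)).card : ℝ) = (S.card : ℝ) := by
      rw [hfib]; push_cast; rfl
    rw [hsumcast] at hlt
    have hm0 : (0:ℝ) < (m : ℝ) + 1 := by positivity
    push_cast at hlt
    linarith
  obtain ⟨j, hj, hpigj⟩ := hpig
  have hjm : j ≤ m := Nat.lt_succ_iff.mp (Finset.mem_range.mp hj)
  refine ⟨S.filter (fun t => g t = j), (j : ℝ) / Real.logb 2 K,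
    (Finset.filter_subset _ _).trans hSsub, by positivity, ?_, ?_, ?_, ?_⟩
  · rw [div_le_one hlogb0]
    calc (j : ℝ) ≤ (m : ℝ) := by exact_mod_cast hjm
      _ ≤ Real.logb 2 K := Nat.floor_le hlogb0.le
  · intro t ht
    exact (Finset.mem_filter.mp ((Finset.mem_filter.mp ht).1)).2
  · intro t ht
    have htS : t ∈ S := (Finset.mem_filter.mp ht).1
    have htj : g t = j := (Finset.mem_filter.mp ht).2
    have hKrw : (2:ℝ) ^ (Real.logb 2 K) = K := Real.rpow_logb (by norm_num) (by norm_num) hK0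
    have hKβ : K ^ ((j : ℝ) / Real.logb 2 K) = (2:ℝ) ^ j := by
      rw [← hKrw, ← Real.rpow_natCast 2 j,
        ← Real.rpow_mul (by norm_num : (0:ℝ) ≤ 2)]
      congr 1
      rw [Real.logb_rpow (by norm_num) (by norm_num)]
      field_simp
    obtain ⟨R1, R2, -⟩ := hkey t htS
    rw [htj] at R1 R2
    rw [hKβ]
    exact ⟨R1, R2⟩
  · have hm_le : ((m : ℝ) + 1) ≤ 1 + Real.logb 2 K := by
      have := Nat.floor_le hlogb0.le
      rw [hm] at *
      linarith [Nat.floor_le hlogb0.le]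
    rw [div_le_iff₀ (by positivity : (0:ℝ) < 4 * (1 + Real.logb 2 K))]
    have h1 : K ^ (1 - ε) * n ≤ 4 * (S.card : ℝ) := by linarith
    have h3 : ((m : ℝ) + 1) * ((S.filter (fun t => g t = j)).card : ℝ)
        ≤ (1 + Real.logb 2 K) * ((S.filter (fun t => g t = j)).card : ℝ) :=
      mul_le_mul_of_nonneg_right hm_le (Nat.cast_nonneg _)
    nlinarith [Nat.cast_nonneg (α := ℝ) (S.filter (fun t => g t = j)).card]
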